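/- Let F, F₊, F₋ : {0,1}^n → ℝ satisfy F₋(x) ≤ F(x) ≤ F₊(x) for all x and E_U[F₊(U) − F₋(U)] ≤ δ. Then for any ε-biased distribution X on {0,1}^n, |E_X[F(X)] − E_U[F(U)]| ≤ δ + ε·max(L(F₊), L(F₋)), where L(G) = Σ_{s≠0} |Ĝ[s]|. -/
import Mathlib


open Finset

/-- The character `χ_s(x) = (-1)^(s·x)` on the Boolean cube. -/
def chi {ι : Type*} [Fintype ι] (s x : ι → Bool) : ℝ :=
  (-1 : ℝ) ^ (Finset.univ.filter fun i => s i && x i).card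

/-- The Fourier coefficient `F̂[s] = E_{x∼U}[F(x) χ_s(x)]`. -/
noncomputable def fhat {ι : Type*} [Fintype ι] [DecidableEq ι]
    (F : (ι → Bool) → ℝ) (s : ι → Bool) : ℝ :=
  (∑ x : ι → Bool, F x * chi s x) / 2 ^ Fintype.card ι

/-- Hamming weight of `s`. -/
def wt {ι : Type*} [Fintype ι] (s : ι → Bool) : ℕ :=
  (Finset.univ.filter fun i => s i).card

/-- Level-`k` Fourier mass `L^k(F) = Σ_{|s|=k} |F̂[s]|`. -/
noncomputable def levelMass {ι : Type*} [Fintype ι] [DecidableEq ι]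
    (F : (ι → Bool) → ℝ) (k : ℕ) : ℝ :=
  ∑ s ∈ Finset.univ.filter (fun s : ι → Bool => wt s = k), |fhat F s|

/-- The `p`-damped Fourier mass `L_p(F) = Σ_{s≠0} p^{|s|} |F̂[s]|`. -/
noncomputable def dampedMass {ι : Type*} [Fintype ι] [DecidableEq ι]
    (F : (ι → Bool) → ℝ) (p : ℝ) : ℝ :=
  ∑ s ∈ Finset.univ.filter (fun s : ι → Bool => s ≠ fun _ => false),
    p ^ wt s * |fhat F s|

lemma chi_prod {ι : Type*} [Fintype ι] (s x : ι → Bool) :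
    chi s x = ∏ i : ι, (if s i && x i then (-1:ℝ) else 1) := by
  classical
  rw [chi, Finset.prod_ite, Finset.prod_const, Finset.prod_const, one_pow, mul_one]

lemma chi_orth {ι : Type*} [Fintype ι] [DecidableEq ι] (x y : ι → Bool) :
    ∑ s : ι → Bool, chi s x * chi s y =
      if x = y then (2:ℝ) ^ Fintype.card ι else 0 := by
  classical
  set f : ι → Bool → ℝ := fun i b =>
    (if b && x i then (-1:ℝ) else 1) * (if b && y i then (-1:ℝ) else 1) with hf
  have h : ∀ s : ι → Bool, chi s x * chi s y = ∏ i : ι, f i (s i) := by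
    intro s; rw [chi_prod, chi_prod, Finset.prod_mul_distrib]
  have key : (∑ s : ι → Bool, ∏ i : ι, f i (s i)) = ∏ i : ι, ∑ b : Bool, f i b := by
    rw [← Fintype.piFinset_univ]
    exact (Finset.prod_univ_sum _ _).symm
  rw [show (∑ s : ι → Bool, chi s x * chi s y) = ∑ s : ι → Bool, ∏ i : ι, f i (s i) from
    Finset.sum_congr rfl fun s _ => h s, key]
  have hfac : ∀ i : ι, (∑ b : Bool, f i b) = if x i = y i then 2 else 0 := by
    intro i; cases hx : x i <;> cases hy : y i <;> simp [hf, Fintype.sum_bool, hx, hy]; norm_num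
  simp only [hfac]
  by_cases hxy : x = y
  · subst hxy; rw [if_pos rfl]; simp [Finset.prod_const]
  · have : ∃ i, x i ≠ y i := by
      by_contra h'; push_neg at h'; exact hxy (funext h')
    obtain ⟨i, hi⟩ := this
    rw [if_neg hxy]
    exact Finset.prod_eq_zero (Finset.mem_univ i) (by simp [hi])

lemma chi_zero {ι : Type*} [Fintype ι] (x : ι → Bool) :
    chi (fun _ => false) x = 1 := by
  classical
  simp [chi]

lemma inversion {ι : Type*} [Fintype ι] [DecidableEq ι]
    (F : (ι → Bool) → ℝ) (x : ι → Bool) :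
    ∑ s : ι → Bool, fhat F s * chi s x = F x := by
  classical
  have h2 : (0:ℝ) < 2 ^ Fintype.card ι := by positivity
  simp only [fhat, div_mul_eq_mul_div, Finset.sum_mul, ← Finset.sum_div]
  rw [Finset.sum_comm]
  have : ∀ y : ι → Bool, ∑ s : ι → Bool, F y * chi s y * chi s x
      = F y * (if y = x then (2:ℝ) ^ Fintype.card ι else 0) := by
    intro y
    rw [← chi_orth y x, Finset.mul_sum]
    exact Finset.sum_congr rfl fun s _ => by ring
  rw [Finset.sum_congr rfl fun y _ => this y]
  simp only [mul_ite, mul_zero]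
  rw [Finset.sum_ite_eq' Finset.univ x (fun y => F y * 2 ^ Fintype.card ι)]
  rw [if_pos (Finset.mem_univ x)]
  field_simp

lemma fool_eq {ι : Type*} [Fintype ι] [DecidableEq ι]
    (G : (ι → Bool) → ℝ) (μ : (ι → Bool) → ℝ)
    (hμ1 : ∑ x : ι → Bool, μ x = 1) :
    (∑ x : ι → Bool, μ x * G x) - (∑ x : ι → Bool, G x) / 2 ^ Fintype.card ι
      = ∑ s ∈ Finset.univ.filter (fun s : ι → Bool => s ≠ fun _ => false),
          fhat G s * (∑ x : ι → Bool, μ x * chi s x) := by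
  classical
  have h1 : (∑ x : ι → Bool, μ x * G x)
      = ∑ s : ι → Bool, fhat G s * (∑ x : ι → Bool, μ x * chi s x) := by
    have : ∀ x : ι → Bool, μ x * G x = ∑ s : ι → Bool, fhat G s * (μ x * chi s x) := by
      intro x
      rw [← inversion G x, Finset.mul_sum]
      exact Finset.sum_congr rfl fun s _ => by ring
    rw [Finset.sum_congr rfl fun x _ => this x, Finset.sum_comm]
    exact Finset.sum_congr rfl fun s _ => by rw [Finset.mul_sum]
  have h0 : fhat G (fun _ => false) = (∑ x : ι → Bool, G x) / 2 ^ Fintype.card ι := by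
    simp [fhat, chi_zero]
  rw [h1, ← Finset.sum_filter_add_sum_filter_not Finset.univ
    (fun s : ι → Bool => s ≠ fun _ => false)]
  have h2 : ∑ s ∈ Finset.univ.filter (fun s : ι → Bool => ¬ s ≠ fun _ => false),
      fhat G s * (∑ x : ι → Bool, μ x * chi s x)
      = (∑ x : ι → Bool, G x) / 2 ^ Fintype.card ι := by
    rw [Finset.sum_filter]
    simp only [not_not]
    rw [Finset.sum_ite_eq' Finset.univ (fun _ => false)
      (fun s => fhat G s * (∑ x : ι → Bool, μ x * chi s x))]
    simp [h0, chi_zero, hμ1]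
  rw [h2]; ring

lemma fool_bound {ι : Type*} [Fintype ι] [DecidableEq ι]
    (G : (ι → Bool) → ℝ) (μ : (ι → Bool) → ℝ)
    (hμ1 : ∑ x : ι → Bool, μ x = 1) (ε : ℝ)
    (hbias : ∀ s : ι → Bool, s ≠ (fun _ => false) →
      |∑ x : ι → Bool, μ x * chi s x| ≤ ε) :
    |(∑ x : ι → Bool, μ x * G x) - (∑ x : ι → Bool, G x) / 2 ^ Fintype.card ι|
      ≤ ε * ∑ s ∈ Finset.univ.filter (fun s : ι → Bool => s ≠ fun _ => false), |fhat G s| := by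
  classical
  rw [fool_eq G μ hμ1]
  refine (Finset.abs_sum_le_sum_abs _ _).trans ?_
  rw [Finset.mul_sum]
  refine Finset.sum_le_sum fun s hs => ?_
  rw [Finset.mem_filter] at hs
  rw [abs_mul]
  calc |fhat G s| * |∑ x : ι → Bool, μ x * chi s x| ≤ |fhat G s| * ε :=
        mul_le_mul_of_nonneg_left (hbias s hs.2) (abs_nonneg _)
    _ = ε * |fhat G s| := mul_comm _ _


/-- Sandwiching approximators plus an ε-biased distribution fool F. -/
theorem sandwich_fools {n : ℕ} (F Fp Fm : (Fin n → Bool) → ℝ) (δ ε : ℝ)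
    (hsand : ∀ x, Fm x ≤ F x ∧ F x ≤ Fp x)
    (hδ : (∑ x : Fin n → Bool, (Fp x - Fm x)) / 2 ^ n ≤ δ)
    (μ : (Fin n → Bool) → ℝ) (hμ0 : ∀ x, 0 ≤ μ x)
    (hμ1 : ∑ x : Fin n → Bool, μ x = 1)
    (hε : 0 ≤ ε)
    (hbias : ∀ s : Fin n → Bool, s ≠ (fun _ => false) →
      |∑ x : Fin n → Bool, μ x * chi s x| ≤ ε) :
    |(∑ x : Fin n → Bool, μ x * F x) - (∑ x : Fin n → Bool, F x) / 2 ^ n| ≤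
      δ + ε * max
        (∑ s ∈ Finset.univ.filter (fun s : Fin n → Bool => s ≠ fun _ => false), |fhat Fp s|)
        (∑ s ∈ Finset.univ.filter (fun s : Fin n → Bool => s ≠ fun _ => false), |fhat Fm s|) := by
  classical
  have hcard : Fintype.card (Fin n) = n := Fintype.card_fin n
  set Lp := ∑ s ∈ Finset.univ.filter (fun s : Fin n → Bool => s ≠ fun _ => false), |fhat Fp s|
  set Lm := ∑ s ∈ Finset.univ.filter (fun s : Fin n → Bool => s ≠ fun _ => false), |fhat Fm s|
  have h2 : (0:ℝ) < 2 ^ n := by positivity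
  have hp := fool_bound Fp μ hμ1 ε hbias
  have hm := fool_bound Fm μ hμ1 ε hbias
  rw [hcard] at hp hm
  have hεLp : ε * Lp ≤ ε * max Lp Lm := mul_le_mul_of_nonneg_left (le_max_left _ _) hε
  have hεLm : ε * Lm ≤ ε * max Lp Lm := mul_le_mul_of_nonneg_left (le_max_right _ _) hε
  rw [abs_sub_le_iff]
  constructor
  · -- upper direction
    have h1 : (∑ x : Fin n → Bool, μ x * F x) ≤ ∑ x : Fin n → Bool, μ x * Fp x :=
      Finset.sum_le_sum fun x _ => mul_le_mul_of_nonneg_left (hsand x).2 (hμ0 x)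
    have h3 : (∑ x : Fin n → Bool, Fp x) / 2 ^ n - (∑ x : Fin n → Bool, F x) / 2 ^ n ≤ δ := by
      rw [div_sub_div_same, ← Finset.sum_sub_distrib]
      refine le_trans ?_ hδ
      apply div_le_div_of_nonneg_right ?_ h2.le |>.trans_eq rfl
      exact Finset.sum_le_sum fun x _ => by
        have := (hsand x).1; have := (hsand x).2; linarith [(hsand x).1, (hsand x).2]
    have h4 : (∑ x : Fin n → Bool, μ x * Fp x) - (∑ x : Fin n → Bool, Fp x) / 2 ^ n ≤ ε * Lp :=
      (le_abs_self _).trans hp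
    linarith
  · have h1 : ∑ x : Fin n → Bool, μ x * Fm x ≤ (∑ x : Fin n → Bool, μ x * F x) :=
      Finset.sum_le_sum fun x _ => mul_le_mul_of_nonneg_left (hsand x).1 (hμ0 x)
    have h3 : (∑ x : Fin n → Bool, F x) / 2 ^ n - (∑ x : Fin n → Bool, Fm x) / 2 ^ n ≤ δ := by
      rw [div_sub_div_same, ← Finset.sum_sub_distrib]
      refine le_trans ?_ hδ
      apply div_le_div_of_nonneg_right ?_ h2.le |>.trans_eq rfl
      exact Finset.sum_le_sum fun x _ => by linarith [(hsand x).1, (hsand x).2]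
    have h4 : (∑ x : Fin n → Bool, Fm x) / 2 ^ n - (∑ x : Fin n → Bool, μ x * Fm x) ≤ ε * Lm :=
      by have := (neg_le_abs _).trans hm; linarith [this]
    linarith
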